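/- Fix m ≥ 1, n ≥ 1, positive reals x₁,…,x_n > 0, positive reals y_i for i in a subset I ⊆ {1,…,n}, and χ ∈ (0, m−1 + |I|/n). Define p(z) = (z/n) Σ_{i∈I} y_i/(1+y_i z) + (z/n) Σ_{j=1}^n g_{m-1,j}'(z)/g_{m-1,j}(z) − χ, where g_{m-1,j}(z) = Σ_{k=0}^{m-1} z^k x_j^{m-1-k}. Then p has exactly one root in the interval (0, +∞). -/

import Mathlib

open Finset Filter Topology

private lemma deriv_sum_pow' (m : ℕ) (c : ℕ → ℝ) (z : ℝ) :
    deriv (fun s : ℝ => ∑ k ∈ Finset.range m, s ^ k * c k) z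
      = ∑ k ∈ Finset.range m, (k : ℝ) * z ^ (k - 1) * c k := by
  have h : HasDerivAt (fun s : ℝ => ∑ k ∈ Finset.range m, s ^ k * c k)
      (∑ k ∈ Finset.range m, (k : ℝ) * z ^ (k - 1) * c k) z :=
    HasDerivAt.fun_sum fun k _ => by simpa using (hasDerivAt_pow k z).mul_const (c k)
  exact h.deriv

private lemma z_mul_deriv (m : ℕ) (c : ℕ → ℝ) (z : ℝ) :
    z * ∑ k ∈ Finset.range m, (k : ℝ) * z ^ (k - 1) * c k
      = ∑ k ∈ Finset.range m, (k : ℝ) * z ^ k * c k := by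
  rw [Finset.mul_sum]
  refine Finset.sum_congr rfl fun k _ => ?_
  cases k with
  | zero => simp
  | succ k => rw [Nat.add_sub_cancel, pow_succ]; ring

private lemma key_ineq (m : ℕ) (hm : 2 ≤ m) (a : ℕ → ℝ) (ha : ∀ k, 0 < a k)
    {z1 z2 : ℝ} (h1 : 0 ≤ z1) (h12 : z1 < z2) :
    (∑ k ∈ Finset.range m, (k:ℝ) * z1 ^ k * a k) * (∑ k ∈ Finset.range m, z2 ^ k * a k)
      < (∑ k ∈ Finset.range m, (k:ℝ) * z2 ^ k * a k) * (∑ k ∈ Finset.range m, z1 ^ k * a k) := by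
  have h2 : 0 < z2 := lt_of_le_of_lt h1 h12
  set c : ℕ → ℕ → ℝ := fun k l => a k * a l * (z1^k * z2^l - z2^k * z1^l) with hc
  have hanti : ∀ k l, c l k = - c k l := fun k l => by simp only [hc]; ring
  have hT : (∑ k ∈ Finset.range m, (k:ℝ) * z1 ^ k * a k) * (∑ k ∈ Finset.range m, z2 ^ k * a k)
      - (∑ k ∈ Finset.range m, (k:ℝ) * z2 ^ k * a k) * (∑ k ∈ Finset.range m, z1 ^ k * a k)
      = ∑ k ∈ Finset.range m, ∑ l ∈ Finset.range m, (k:ℝ) * c k l := by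
    rw [Finset.sum_mul_sum, Finset.sum_mul_sum, ← Finset.sum_sub_distrib]
    refine Finset.sum_congr rfl fun k _ => ?_
    rw [← Finset.sum_sub_distrib]
    exact Finset.sum_congr rfl fun l _ => by simp only [hc]; ring
  have hneg : (∑ k ∈ Finset.range m, ∑ l ∈ Finset.range m, (l:ℝ) * c k l)
      + (∑ k ∈ Finset.range m, ∑ l ∈ Finset.range m, (k:ℝ) * c k l) = 0 := by
    rw [Finset.sum_comm (s := Finset.range m) (t := Finset.range m)
      (f := fun k l => (l:ℝ) * c k l), ← Finset.sum_add_distrib]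
    refine Finset.sum_eq_zero fun k _ => ?_
    rw [← Finset.sum_add_distrib]
    refine Finset.sum_eq_zero fun l _ => ?_
    rw [hanti k l]; ring
  have h2T : (∑ k ∈ Finset.range m, ∑ l ∈ Finset.range m, ((k:ℝ) - l) * c k l)
      = 2 * ∑ k ∈ Finset.range m, ∑ l ∈ Finset.range m, (k:ℝ) * c k l := by
    have e : (∑ k ∈ Finset.range m, ∑ l ∈ Finset.range m, ((k:ℝ) - l) * c k l)
        = (∑ k ∈ Finset.range m, ∑ l ∈ Finset.range m, (k:ℝ) * c k l)
          - (∑ k ∈ Finset.range m, ∑ l ∈ Finset.range m, (l:ℝ) * c k l) := by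
      rw [← Finset.sum_sub_distrib]
      refine Finset.sum_congr rfl fun k _ => ?_
      rw [← Finset.sum_sub_distrib]
      exact Finset.sum_congr rfl fun l _ => by ring
    rw [e]; linarith
  have hterm : ∀ k ∈ Finset.range m, ∀ l ∈ Finset.range m, ((k:ℝ) - l) * c k l ≤ 0 := by
    intro k hk l hl
    rcases lt_trichotomy k l with hkl | rfl | hkl
    · obtain ⟨d, hd, rfl⟩ : ∃ d, d ≠ 0 ∧ l = k + d := ⟨l - k, by omega, by omega⟩
      have e : z1^k * z2^(k+d) - z2^k * z1^(k+d) = (z1*z2)^k * (z2^d - z1^d) := by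
        rw [pow_add, pow_add, mul_pow]; ring
      have hnn : 0 ≤ (z1*z2)^k * (z2^d - z1^d) :=
        mul_nonneg (pow_nonneg (mul_nonneg h1 h2.le) k)
          (sub_nonneg.2 (pow_le_pow_left₀ h1 h12.le d))
      have hp := mul_pos (ha k) (ha (k+d))
      simp only [hc, e]
      push_cast
      nlinarith [mul_nonneg hp.le hnn, (Nat.cast_nonneg d : (0:ℝ) ≤ d)]
    · simp
    · obtain ⟨d, hd, rfl⟩ : ∃ d, d ≠ 0 ∧ k = l + d := ⟨k - l, by omega, by omega⟩
      have e : z1^(l+d) * z2^l - z2^(l+d) * z1^l = (z1*z2)^l * (z1^d - z2^d) := by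
        rw [pow_add, pow_add, mul_pow]; ring
      have hnn : 0 ≤ (z1*z2)^l * (z2^d - z1^d) :=
        mul_nonneg (pow_nonneg (mul_nonneg h1 h2.le) l)
          (sub_nonneg.2 (pow_le_pow_left₀ h1 h12.le d))
      have hp := mul_pos (ha (l+d)) (ha l)
      simp only [hc, e]
      push_cast
      nlinarith [mul_nonneg hp.le hnn, (Nat.cast_nonneg d : (0:ℝ) ≤ d)]
  have houter : (∑ k ∈ Finset.range m, ∑ l ∈ Finset.range m, ((k:ℝ) - l) * c k l) < 0 := by
    have h1m : (1:ℕ) ∈ Finset.range m := Finset.mem_range.2 (by omega)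
    have hin : ∑ l ∈ Finset.range m, (((1:ℕ):ℝ) - l) * c 1 l < 0 := by
      have hstrict : (((1:ℕ):ℝ) - ((0:ℕ):ℝ)) * c 1 0 < 0 := by
        simp only [hc]
        have hp := mul_pos (ha 1) (ha 0)
        simp only [pow_one, pow_zero, mul_one]
        push_cast
        nlinarith
      have := Finset.sum_lt_sum (f := fun l => (((1:ℕ):ℝ) - l) * c 1 l) (g := fun _ => (0:ℝ))
        (fun l hl => hterm 1 h1m l hl) ⟨0, Finset.mem_range.2 (by omega), hstrict⟩
      simpa using this
    have := Finset.sum_lt_sum (f := fun k : ℕ => ∑ l ∈ Finset.range m, ((k:ℝ) - l) * c k l)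
      (g := fun _ => (0:ℝ))
      (fun k hk => Finset.sum_nonpos (fun l hl => hterm k hk l hl)) ⟨1, h1m, hin⟩
    simpa using this
  nlinarith [hT, h2T, houter]

private lemma tendsto_inv_pow_sum (m : ℕ) (hm : 1 ≤ m) (w : ℕ → ℝ) :
    Filter.Tendsto (fun z : ℝ => ∑ k ∈ Finset.range m, w k / z ^ (m - 1 - k)) atTop
      (𝓝 (w (m - 1))) := by
  have h : Filter.Tendsto (fun z : ℝ => ∑ k ∈ Finset.range m, w k / z ^ (m - 1 - k)) atTop
      (𝓝 (∑ k ∈ Finset.range m, if k = m - 1 then w k else 0)) := by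
    refine tendsto_finset_sum _ fun k hk => ?_
    have hk' := Finset.mem_range.1 hk
    by_cases h : k = m - 1
    · subst h
      simp only [Nat.sub_self, pow_zero, div_one, if_true]
      exact tendsto_const_nhds
    · simp only [h, if_false]
      exact Filter.Tendsto.div_atTop tendsto_const_nhds (tendsto_pow_atTop (by omega))
  simpa [Finset.sum_ite_eq' (Finset.range m) (m-1) w, Finset.mem_range.2 (by omega : m - 1 < m)]
    using h

private lemma tendsto_ratio (m : ℕ) (hm : 1 ≤ m) (a : ℕ → ℝ) (ha : ∀ k, 0 < a k) :
    Filter.Tendsto (fun z : ℝ => (∑ k ∈ Finset.range m, (k:ℝ) * z ^ k * a k)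
        / (∑ k ∈ Finset.range m, z ^ k * a k)) atTop (𝓝 ((m:ℝ) - 1)) := by
  have hNa := tendsto_inv_pow_sum m hm (fun k => (k:ℝ) * a k)
  have hDa := tendsto_inv_pow_sum m hm a
  have hlim := hNa.div hDa (ne_of_gt (ha (m-1)))
  have heq : ((m-1:ℕ):ℝ) * a (m - 1) / a (m - 1) = (m:ℝ) - 1 := by
    rw [mul_div_assoc, div_self (ne_of_gt (ha (m-1))), mul_one, Nat.cast_sub hm, Nat.cast_one]
  rw [heq] at hlim
  refine hlim.congr' ?_
  filter_upwards [eventually_gt_atTop 0] with z hz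
  have hzne : z ≠ 0 := hz.ne'
  have e1 : (∑ k ∈ Finset.range m, (k:ℝ) * a k / z ^ (m - 1 - k))
      = (∑ k ∈ Finset.range m, (k:ℝ) * z ^ k * a k) / z ^ (m-1) := by
    rw [Finset.sum_div]
    refine Finset.sum_congr rfl fun k hk => ?_
    have hk' := Finset.mem_range.1 hk
    have hsplit : z ^ (m-1) = z ^ k * z ^ (m-1-k) := by rw [← pow_add]; congr 1; omega
    rw [hsplit, show (k:ℝ) * z ^ k * a k = z ^ k * ((k:ℝ) * a k) by ring,
      mul_div_mul_left _ _ (pow_ne_zero k hzne)]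
  have e2 : (∑ k ∈ Finset.range m, a k / z ^ (m - 1 - k))
      = (∑ k ∈ Finset.range m, z ^ k * a k) / z ^ (m-1) := by
    rw [Finset.sum_div]
    refine Finset.sum_congr rfl fun k hk => ?_
    have hk' := Finset.mem_range.1 hk
    have hsplit : z ^ (m-1) = z ^ k * z ^ (m-1-k) := by rw [← pow_add]; congr 1; omega
    rw [hsplit, mul_div_mul_left _ _ (pow_ne_zero k hzne)]
  simp only [Pi.div_apply]
  rw [e1, e2, div_div_div_cancel_right₀]
  exact pow_ne_zero _ hzne

private lemma tendsto_H (y : ℝ) (hy : 0 < y) :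
    Filter.Tendsto (fun z : ℝ => y * z / (1 + y * z)) atTop (𝓝 1) := by
  have h1 : Filter.Tendsto (fun z : ℝ => 1 + y * z) atTop atTop :=
    tendsto_atTop_add_const_left _ 1 (Filter.Tendsto.const_mul_atTop hy tendsto_id)
  have h2 : Filter.Tendsto (fun z : ℝ => 1 - (1 + y * z)⁻¹) atTop (𝓝 1) := by
    simpa using tendsto_const_nhds.sub h1.inv_tendsto_atTop
  refine h2.congr' ?_
  filter_upwards [eventually_gt_atTop 0] with z hz
  have hne : (1 + y * z) ≠ 0 := by nlinarith
  field_simp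
  ring

private lemma main_lem (m n : ℕ) (hm : 1 ≤ m) (hn : 1 ≤ n) (x y : Fin n → ℝ)
    (hx : ∀ j, 0 < x j) (I : Finset (Fin n)) (hy : ∀ i ∈ I, 0 < y i)
    (χ : ℝ) (hχ0 : 0 < χ) (hχ1 : χ < (m : ℝ) - 1 + (I.card : ℝ) / n) :
    ∃! z : ℝ, z ∈ Set.Ioi (0 : ℝ) ∧
      (1/(n:ℝ)) * ((∑ i ∈ I, y i * z / (1 + y i * z)) +
        ∑ j : Fin n, (∑ k ∈ Finset.range m, (k:ℝ) * z ^ k * x j ^ (m-1-k)) /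
          (∑ k ∈ Finset.range m, z ^ k * x j ^ (m-1-k))) - χ = 0 := by
  have hnR : (0:ℝ) < n := by exact_mod_cast hn
  set φ : ℝ → ℝ := fun z => (1/(n:ℝ)) * ((∑ i ∈ I, y i * z / (1 + y i * z)) +
    ∑ j : Fin n, (∑ k ∈ Finset.range m, (k:ℝ) * z ^ k * x j ^ (m-1-k)) /
      (∑ k ∈ Finset.range m, z ^ k * x j ^ (m-1-k))) - χ with hφ
  suffices h : ∃! z : ℝ, z ∈ Set.Ioi (0:ℝ) ∧ φ z = 0 by
    simpa only [hφ] using h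
  have hapos : ∀ (j : Fin n) (k : ℕ), (0:ℝ) < x j ^ (m-1-k) :=
    fun j k => pow_pos (hx j) _
  have hD_pos : ∀ (j : Fin n) {z : ℝ}, 0 ≤ z →
      0 < ∑ k ∈ Finset.range m, z ^ k * x j ^ (m-1-k) := by
    intro j z hz
    refine Finset.sum_pos' (fun k _ => mul_nonneg (pow_nonneg hz k) (hapos j k).le)
      ⟨0, Finset.mem_range.2 (by omega), ?_⟩
    simpa using hapos j 0
  have hH_lt : ∀ (yi : ℝ), 0 < yi → ∀ {z1 z2 : ℝ}, 0 ≤ z1 → z1 < z2 →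
      yi * z1 / (1 + yi * z1) < yi * z2 / (1 + yi * z2) := by
    intro yi hyi z1 z2 hz1 h12
    have d1 : 0 < 1 + yi * z1 := by nlinarith
    have d2 : 0 < 1 + yi * z2 := by nlinarith
    rw [div_lt_div_iff₀ d1 d2]
    nlinarith
  -- strict monotonicity
  have hmono : StrictMonoOn φ (Set.Ici 0) := by
    intro z1 hz1 z2 hz2 h12
    have hz1' : (0:ℝ) ≤ z1 := hz1
    simp only [hφ]
    have hA : (∑ i ∈ I, y i * z1 / (1 + y i * z1)) ≤ ∑ i ∈ I, y i * z2 / (1 + y i * z2) :=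
      Finset.sum_le_sum fun i hi => (hH_lt _ (hy i hi) hz1' h12).le
    rcases eq_or_lt_of_le hm with h1 | h2
    · -- m = 1
      have hm1 : m = 1 := h1.symm
      subst hm1
      have hzero : ∀ z : ℝ, (∑ j : Fin n, (∑ k ∈ Finset.range 1, (k:ℝ) * z ^ k * x j ^ (1-1-k)) /
          (∑ k ∈ Finset.range 1, z ^ k * x j ^ (1-1-k))) = 0 := by
        intro z; simp
      have hIne : I.Nonempty := by
        rw [← Finset.card_pos]
        by_contra hcon
        have : I.card = 0 := by omega
        rw [this] at hχ1
        norm_num at hχ1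
        linarith
      have hAlt : (∑ i ∈ I, y i * z1 / (1 + y i * z1)) < ∑ i ∈ I, y i * z2 / (1 + y i * z2) :=
        Finset.sum_lt_sum_of_nonempty hIne fun i hi => hH_lt _ (hy i hi) hz1' h12
      rw [hzero z1, hzero z2]
      have hinv : (0:ℝ) < 1/(n:ℝ) := by positivity
      nlinarith
    · -- 2 ≤ m
      have hm2 : 2 ≤ m := h2
      have hne : (Finset.univ : Finset (Fin n)).Nonempty := by
        have : Nonempty (Fin n) := ⟨⟨0, hn⟩⟩
        exact Finset.univ_nonempty
      have hB : (∑ j : Fin n, (∑ k ∈ Finset.range m, (k:ℝ) * z1 ^ k * x j ^ (m-1-k)) /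
            (∑ k ∈ Finset.range m, z1 ^ k * x j ^ (m-1-k)))
          < ∑ j : Fin n, (∑ k ∈ Finset.range m, (k:ℝ) * z2 ^ k * x j ^ (m-1-k)) /
            (∑ k ∈ Finset.range m, z2 ^ k * x j ^ (m-1-k)) := by
        refine Finset.sum_lt_sum_of_nonempty hne fun j _ => ?_
        rw [div_lt_div_iff₀ (hD_pos j hz1') (hD_pos j (le_trans hz1' h12.le))]
        exact key_ineq m hm2 (fun k => x j ^ (m-1-k)) (hapos j) hz1' h12
      have hinv : (0:ℝ) < 1/(n:ℝ) := by positivity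
      nlinarith
  -- value at 0
  have hφ0 : φ 0 = -χ := by
    have hN0 : ∀ j : Fin n, (∑ k ∈ Finset.range m, (k:ℝ) * (0:ℝ) ^ k * x j ^ (m-1-k)) = 0 := by
      intro j
      refine Finset.sum_eq_zero fun k _ => ?_
      cases k with
      | zero => simp
      | succ k => simp [zero_pow]
    simp only [hφ, hN0]
    simp
  -- continuity
  have hcont : ContinuousOn φ (Set.Ici 0) := by
    simp only [hφ]
    apply ContinuousOn.sub _ continuousOn_const
    apply ContinuousOn.mul continuousOn_const
    apply ContinuousOn.add
    · refine continuousOn_finset_sum _ fun i hi => ?_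
      refine ContinuousOn.div (by fun_prop) (by fun_prop) fun z hz => ?_
      have hyi := hy i hi
      have hz' : (0:ℝ) ≤ z := hz
      nlinarith
    · refine continuousOn_finset_sum _ fun j _ => ?_
      exact ContinuousOn.div (Continuous.continuousOn (by fun_prop))
        (Continuous.continuousOn (by fun_prop)) fun z hz => (hD_pos j hz).ne'
  -- limit at infinity
  have hφt : Filter.Tendsto φ atTop
      (𝓝 ((1/(n:ℝ)) * ((I.card : ℝ) + (n:ℝ) * ((m:ℝ)-1)) - χ)) := by
    have hA : Filter.Tendsto (fun z : ℝ => ∑ i ∈ I, y i * z / (1 + y i * z)) atTop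
        (𝓝 (I.card : ℝ)) := by
      have := tendsto_finset_sum I (fun i hi => tendsto_H (y i) (hy i hi))
      simpa using this
    have hB : Filter.Tendsto (fun z : ℝ => ∑ j : Fin n,
          (∑ k ∈ Finset.range m, (k:ℝ) * z ^ k * x j ^ (m-1-k)) /
          (∑ k ∈ Finset.range m, z ^ k * x j ^ (m-1-k))) atTop
        (𝓝 ((n:ℝ) * ((m:ℝ)-1))) := by
      have := tendsto_finset_sum (Finset.univ : Finset (Fin n))
        (fun j _ => tendsto_ratio m hm (fun k => x j ^ (m-1-k)) (hapos j))
      simpa [Finset.card_univ, nsmul_eq_mul, mul_sub] using this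
    simpa only [hφ] using ((hA.add hB).const_mul (1/(n:ℝ))).sub_const χ
  have hL : 0 < (1/(n:ℝ)) * ((I.card : ℝ) + (n:ℝ) * ((m:ℝ)-1)) - χ := by
    have he : (1/(n:ℝ)) * ((I.card : ℝ) + (n:ℝ) * ((m:ℝ)-1)) = (m:ℝ) - 1 + (I.card:ℝ)/n := by
      field_simp
      ring
    rw [he]
    linarith
  obtain ⟨Z, hZpos, hZval⟩ : ∃ Z : ℝ, 0 < Z ∧ 0 < φ Z := by
    have h1 : ∀ᶠ z in atTop, 0 < φ z := hφt.eventually (eventually_gt_nhds hL)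
    obtain ⟨Z, hZ1, hZ2⟩ := (h1.and (eventually_gt_atTop 0)).exists
    exact ⟨Z, hZ2, hZ1⟩
  have h0mem : (0:ℝ) ∈ Set.Ioo (φ 0) (φ Z) := by
    rw [hφ0]; exact ⟨neg_lt_zero.2 hχ0, hZval⟩
  obtain ⟨z, hzmem, hzval⟩ :=
    intermediate_value_Ioo hZpos.le (hcont.mono (Set.Icc_subset_Ici_self)) h0mem
  refine ⟨z, ⟨hzmem.1, hzval⟩, ?_⟩
  rintro w ⟨hw, hwval⟩
  exact hmono.injOn (Set.mem_Ici.2 (le_of_lt hw)) (Set.mem_Ici.2 hzmem.1.le) (hwval.trans hzval.symm)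
/-- For `χ ∈ (0, m-1+|I|/n)`, the function
`p(z) = (z/n) Σ_{i∈I} y_i/(1+y_i z) + (z/n) Σ_j g_{m-1,j}'(z)/g_{m-1,j}(z) - χ`
has exactly one root in `(0, ∞)`. -/
theorem stmt_3 (m n : ℕ) (hm : 1 ≤ m) (hn : 1 ≤ n) (x y : Fin n → ℝ)
    (hx : ∀ j, 0 < x j) (I : Finset (Fin n)) (hy : ∀ i ∈ I, 0 < y i)
    (χ : ℝ) (hχ0 : 0 < χ) (hχ1 : χ < (m : ℝ) - 1 + (I.card : ℝ) / n) :
    ∃! z : ℝ, z ∈ Set.Ioi (0 : ℝ) ∧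
      (z / n) * (∑ i ∈ I, y i / (1 + y i * z)) +
        (z / n) * (∑ j : Fin n,
          deriv (fun s : ℝ => ∑ k ∈ Finset.range m, s ^ k * x j ^ (m - 1 - k)) z /
            (∑ k ∈ Finset.range m, z ^ k * x j ^ (m - 1 - k))) - χ = 0 := by
  have hq : ∀ z : ℝ,
      (z / n) * (∑ i ∈ I, y i / (1 + y i * z)) +
        (z / n) * (∑ j : Fin n,
          deriv (fun s : ℝ => ∑ k ∈ Finset.range m, s ^ k * x j ^ (m - 1 - k)) z /
            (∑ k ∈ Finset.range m, z ^ k * x j ^ (m - 1 - k))) - χ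
      = (1/(n:ℝ)) * ((∑ i ∈ I, y i * z / (1 + y i * z)) +
        ∑ j : Fin n, (∑ k ∈ Finset.range m, (k:ℝ) * z ^ k * x j ^ (m-1-k)) /
          (∑ k ∈ Finset.range m, z ^ k * x j ^ (m-1-k))) - χ := by
    intro z
    have e1 : (z / n) * (∑ i ∈ I, y i / (1 + y i * z))
        = (1/(n:ℝ)) * (∑ i ∈ I, y i * z / (1 + y i * z)) := by
      rw [Finset.mul_sum, Finset.mul_sum]
      exact Finset.sum_congr rfl fun i _ => by ring
    have e2 : (z / n) * (∑ j : Fin n,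
          deriv (fun s : ℝ => ∑ k ∈ Finset.range m, s ^ k * x j ^ (m - 1 - k)) z /
            (∑ k ∈ Finset.range m, z ^ k * x j ^ (m - 1 - k)))
        = (1/(n:ℝ)) * ∑ j : Fin n, (∑ k ∈ Finset.range m, (k:ℝ) * z ^ k * x j ^ (m-1-k)) /
          (∑ k ∈ Finset.range m, z ^ k * x j ^ (m-1-k)) := by
      rw [Finset.mul_sum, Finset.mul_sum]
      refine Finset.sum_congr rfl fun j _ => ?_
      rw [deriv_sum_pow' m (fun k => x j ^ (m-1-k)) z]
      have hz := z_mul_deriv m (fun k => x j ^ (m-1-k)) z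
      rw [div_mul_div_comm, div_mul_div_comm, hz, one_mul]
    rw [e1, e2, mul_add]
  obtain ⟨z, ⟨hz1, hz2⟩, hz3⟩ := main_lem m n hm hn x y hx I hy χ hχ0 hχ1
  refine ⟨z, ⟨hz1, by rw [hq z]; linarith [hz2]⟩, ?_⟩
  rintro w ⟨hw1, hw2⟩
  refine hz3 w ⟨hw1, ?_⟩
  rw [← hq w]
  exact hw2
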